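/- Let α_1,...,α_{n+1} be exchangeable real-valued random variables with no ties almost surely. Then for any ε ∈ (0,1), P( |{i : α_i ≥ α_{n+1}}|/(n+1) > ε ) ≤ 1 - ε + 1/(n+1). -/

import Mathlib

open MeasureTheory ProbabilityTheory Finset
open scoped ENNReal

section ConformalAux

lemma conformal_rank_meas {Ω : Type*} [MeasurableSpace Ω] {n : ℕ}
    (α : Fin (n+1) → Ω → ℝ) (hmeas : ∀ i, Measurable (α i)) (j : Fin (n+1)) :
    Measurable (fun ω => (univ.filter (fun i => α j ω ≤ α i ω)).card) := by
  simp_rw [Finset.card_filter]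
  exact Finset.measurable_sum _ fun i _ =>
    Measurable.ite (measurableSet_le (hmeas j) (hmeas i)) measurable_const measurable_const

lemma conformal_rank_exch {Ω : Type*} [MeasurableSpace Ω] (P : Measure Ω) {n : ℕ}
    (α : Fin (n+1) → Ω → ℝ) (hmeas : ∀ i, Measurable (α i))
    (hexch : ∀ σ : Equiv.Perm (Fin (n + 1)),
      Measure.map (fun ω i => α (σ i) ω) P = Measure.map (fun ω i => α i ω) P)
    (j : Fin (n+1)) (k : ℕ) :
    P {ω | (univ.filter (fun i => α j ω ≤ α i ω)).card = k}
      = P {ω | (univ.filter (fun i => α (Fin.last n) ω ≤ α i ω)).card = k} := by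
  set σ := Equiv.swap j (Fin.last n) with hσ
  have hG : Measurable (fun ω (i : Fin (n+1)) => α (σ i) ω) :=
    measurable_pi_lambda _ fun i => hmeas _
  have hF : Measurable (fun ω (i : Fin (n+1)) => α i ω) :=
    measurable_pi_lambda _ fun i => hmeas _
  have hcm : Measurable (fun f : Fin (n+1) → ℝ =>
      (univ.filter (fun i => f (Fin.last n) ≤ f i)).card) := by
    simp_rw [Finset.card_filter]
    exact Finset.measurable_sum _ fun i _ =>
      Measurable.ite (measurableSet_le (measurable_pi_apply _) (measurable_pi_apply _))
        measurable_const measurable_const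
  have hS : MeasurableSet {f : Fin (n+1) → ℝ |
      (univ.filter (fun i => f (Fin.last n) ≤ f i)).card = k} :=
    hcm (measurableSet_singleton k)
  have key : ∀ ω, (univ.filter (fun i => α j ω ≤ α (σ i) ω)).card
      = (univ.filter (fun i => α j ω ≤ α i ω)).card := by
    intro ω
    rw [Finset.card_filter, Finset.card_filter]
    exact Equiv.sum_comp σ (fun i => if α j ω ≤ α i ω then 1 else 0)
  have h1 : {ω | (univ.filter (fun i => α j ω ≤ α i ω)).card = k}
      = (fun ω (i : Fin (n+1)) => α (σ i) ω) ⁻¹'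
        {f | (univ.filter (fun i => f (Fin.last n) ≤ f i)).card = k} := by
    ext ω
    simp only [Set.mem_setOf_eq, Set.mem_preimage, Equiv.swap_apply_right, hσ, key ω]
    rw [← hσ, key ω]
  have h2 : {ω | (univ.filter (fun i => α (Fin.last n) ω ≤ α i ω)).card = k}
      = (fun ω (i : Fin (n+1)) => α i ω) ⁻¹'
        {f | (univ.filter (fun i => f (Fin.last n) ≤ f i)).card = k} := rfl
  rw [h1, h2, ← Measure.map_apply hG hS, ← Measure.map_apply hF hS, hexch σ]

lemma conformal_rank_lt {n : ℕ} (v : Fin (n+1) → ℝ) {a b : Fin (n+1)} (h : v a < v b) :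
    (univ.filter (fun i => v b ≤ v i)).card < (univ.filter (fun i => v a ≤ v i)).card := by
  apply Finset.card_lt_card
  constructor
  · intro i hi
    simp only [mem_filter, mem_univ, true_and] at hi ⊢
    linarith
  · intro hsub
    have := hsub (by simp : a ∈ univ.filter (fun i => v a ≤ v i))
    simp only [mem_filter, mem_univ, true_and] at this
    linarith

lemma conformal_rank_inj {n : ℕ} (v : Fin (n+1) → ℝ) (hv : ∀ i j, i ≠ j → v i ≠ v j) :
    Function.Injective (fun j => (univ.filter (fun i => v j ≤ v i)).card) := by
  intro a b hab
  by_contra hne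
  rcases (hv a b hne).lt_or_gt with h | h
  · exact absurd hab (Nat.ne_of_lt (conformal_rank_lt v h)).symm
  · exact absurd hab (Nat.ne_of_lt (conformal_rank_lt v h))

lemma conformal_rank_mem_Icc {n : ℕ} (v : Fin (n+1) → ℝ) (j : Fin (n+1)) :
    (univ.filter (fun i => v j ≤ v i)).card ∈ Finset.Icc 1 (n+1) := by
  rw [Finset.mem_Icc]
  constructor
  · exact Finset.card_pos.2 ⟨j, by simp⟩
  · simpa using Finset.card_filter_le univ (fun i => v j ≤ v i)

lemma conformal_rank_surj {n : ℕ} (v : Fin (n+1) → ℝ) (hv : ∀ i j, i ≠ j → v i ≠ v j)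
    (k : ℕ) (hk : k ∈ Finset.Icc 1 (n+1)) :
    ∃ j, (univ.filter (fun i => v j ≤ v i)).card = k := by
  set r := fun j : Fin (n+1) => (univ.filter (fun i => v j ≤ v i)).card with hr
  have himg : Finset.image r univ = Finset.Icc 1 (n+1) := by
    apply Finset.eq_of_subset_of_card_le
    · intro x hx
      rcases Finset.mem_image.1 hx with ⟨j, _, rfl⟩
      exact conformal_rank_mem_Icc v j
    · rw [Nat.card_Icc, Finset.card_image_of_injective _ (conformal_rank_inj v hv)]
      simp
  have : k ∈ Finset.image r univ := himg ▸ hk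
  rcases Finset.mem_image.1 this with ⟨j, _, hj⟩
  exact ⟨j, hj⟩

lemma conformal_noties_ae {Ω : Type*} [MeasurableSpace Ω] (P : Measure Ω) {n : ℕ}
    (α : Fin (n+1) → Ω → ℝ)
    (hties : ∀ i j, i ≠ j → P {ω | α i ω = α j ω} = 0) :
    P {ω | ∀ i j, i ≠ j → α i ω ≠ α j ω}ᶜ = 0 := by
  have : {ω | ∀ i j : Fin (n+1), i ≠ j → α i ω ≠ α j ω}ᶜ
      = ⋃ i, ⋃ j, ⋃ (_ : i ≠ j), {ω | α i ω = α j ω} := by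
    ext ω
    simp only [Set.mem_compl_iff, Set.mem_setOf_eq, Set.mem_iUnion]
    push_neg
    tauto
  rw [this]
  exact measure_iUnion_null fun i => measure_iUnion_null fun j =>
    measure_iUnion_null fun h => hties i j h

lemma conformal_noties_meas {Ω : Type*} [MeasurableSpace Ω] {n : ℕ}
    (α : Fin (n+1) → Ω → ℝ) (hmeas : ∀ i, Measurable (α i)) :
    MeasurableSet {ω | ∀ i j : Fin (n+1), i ≠ j → α i ω ≠ α j ω} := by
  have : {ω | ∀ i j : Fin (n+1), i ≠ j → α i ω ≠ α j ω}
      = ⋂ i, ⋂ j, ⋂ (_ : i ≠ j), {ω | α i ω = α j ω}ᶜ := by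
    ext ω
    simp only [Set.mem_iInter, Set.mem_compl_iff, Set.mem_setOf_eq]
  rw [this]
  exact MeasurableSet.iInter fun i => MeasurableSet.iInter fun j =>
    MeasurableSet.iInter fun _ => (measurableSet_eq_fun (hmeas i) (hmeas j)).compl

lemma conformal_rank_uniform {Ω : Type*} [MeasurableSpace Ω] (P : Measure Ω)
    [IsProbabilityMeasure P] {n : ℕ}
    (α : Fin (n+1) → Ω → ℝ) (hmeas : ∀ i, Measurable (α i))
    (hexch : ∀ σ : Equiv.Perm (Fin (n + 1)),
      Measure.map (fun ω i => α (σ i) ω) P = Measure.map (fun ω i => α i ω) P)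
    (hties : ∀ i j, i ≠ j → P {ω | α i ω = α j ω} = 0)
    (k : ℕ) (hk : k ∈ Finset.Icc 1 (n+1)) :
    P {ω | (univ.filter (fun i => α (Fin.last n) ω ≤ α i ω)).card = k}
      = ((n+1 : ℕ) : ℝ≥0∞)⁻¹ := by
  set E := {ω | ∀ i j : Fin (n+1), i ≠ j → α i ω ≠ α j ω} with hE
  have hEc : P Eᶜ = 0 := conformal_noties_ae P α hties
  have hEm : MeasurableSet E := conformal_noties_meas α hmeas
  set A := fun j : Fin (n+1) => {ω | (univ.filter (fun i => α j ω ≤ α i ω)).card = k} with hA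
  have hAm : ∀ j, MeasurableSet (A j) := fun j =>
    conformal_rank_meas α hmeas j (measurableSet_singleton k)
  set B := fun j : Fin (n+1) => A j ∩ E with hB
  have hBm : ∀ j, MeasurableSet (B j) := fun j => (hAm j).inter hEm
  have hdisj : Pairwise (Function.onFun Disjoint B) := by
    intro a b hab
    rw [Function.onFun, Set.disjoint_left]
    rintro ω ⟨ha, hEa⟩ ⟨hb, _⟩
    exact hab (conformal_rank_inj (fun i => α i ω) (fun i j h => hEa i j h) (ha.trans hb.symm))
  have hcover : (⋃ j, B j) = E := by
    ext ω
    simp only [hB, Set.mem_iUnion, Set.mem_inter_iff, hA, Set.mem_setOf_eq]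
    constructor
    · rintro ⟨j, _, hωE⟩; exact hωE
    · intro hωE
      obtain ⟨j, hj⟩ := conformal_rank_surj (fun i => α i ω) (fun i j h => hωE i j h) k hk
      exact ⟨j, hj, hωE⟩
  have hsum : ∑ j : Fin (n+1), P (B j) = 1 := by
    rw [← tsum_fintype (L := SummationFilter.unconditional _), ← measure_iUnion hdisj hBm, hcover]
    exact (prob_compl_eq_zero_iff hEm).1 hEc
  have hBA : ∀ j, P (B j) = P (A j) := fun j => measure_inter_conull hEc
  have hsame : ∀ j : Fin (n+1), P (A j) = P (A (Fin.last n)) := fun j =>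
    conformal_rank_exch P α hmeas hexch j k
  have hone : ((n+1 : ℕ) : ℝ≥0∞) * P (A (Fin.last n)) = 1 := by
    calc ((n+1 : ℕ) : ℝ≥0∞) * P (A (Fin.last n))
        = ∑ _j : Fin (n+1), P (A (Fin.last n)) := by
          rw [Finset.sum_const, Finset.card_univ, Fintype.card_fin, nsmul_eq_mul]
      _ = ∑ j : Fin (n+1), P (B j) := by
          refine Finset.sum_congr rfl fun j _ => ?_
          rw [hBA j, hsame j]
      _ = 1 := hsum
  have hN0 : ((n+1 : ℕ) : ℝ≥0∞) ≠ 0 := by simp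
  have hNtop : ((n+1 : ℕ) : ℝ≥0∞) ≠ ⊤ := by simp
  calc P (A (Fin.last n)) = ((n+1 : ℕ) : ℝ≥0∞)⁻¹ * (((n+1 : ℕ) : ℝ≥0∞) * P (A (Fin.last n))) := by
        rw [← mul_assoc, ENNReal.inv_mul_cancel hN0 hNtop, one_mul]
    _ = ((n+1 : ℕ) : ℝ≥0∞)⁻¹ := by rw [hone, mul_one]

end ConformalAux

/-- Upper (anti-conservativeness) bound of conformal prediction: for exchangeable
scores with a.s. no ties, the p-value event has probability at most `1 - ε + 1/(n+1)`. -/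
theorem conformal_pvalue_upper_bound
    {Ω : Type*} [MeasurableSpace Ω] (P : Measure Ω) [IsProbabilityMeasure P]
    (n : ℕ) (α : Fin (n + 1) → Ω → ℝ) (hmeas : ∀ i, Measurable (α i))
    (hexch : ∀ σ : Equiv.Perm (Fin (n + 1)),
      Measure.map (fun ω i => α (σ i) ω) P = Measure.map (fun ω i => α i ω) P)
    (hties : ∀ i j, i ≠ j → P {ω | α i ω = α j ω} = 0)
    (ε : ℝ) (hε0 : 0 < ε) (hε1 : ε < 1) :
    P {ω | (ε : ℝ) <
        ((Finset.univ.filter (fun i => α (Fin.last n) ω ≤ α i ω)).card : ℝ) / (n + 1)}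
      ≤ ENNReal.ofReal (1 - ε + 1 / (n + 1)) := by
  have hN : (0:ℝ) < (n:ℝ) + 1 := by positivity
  set A := fun k : ℕ => {ω | (univ.filter (fun i => α (Fin.last n) ω ≤ α i ω)).card = k}
    with hA
  set S : Finset ℕ := (Finset.Icc 1 (n+1)).filter (fun k => ε < (k:ℝ) / ((n:ℝ) + 1)) with hS
  -- the target event is covered by the rank-level events over S
  have hsub : {ω | (ε : ℝ) <
        ((Finset.univ.filter (fun i => α (Fin.last n) ω ≤ α i ω)).card : ℝ) / (n + 1)}
      ⊆ ⋃ k ∈ S, A k := by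
    intro ω hω
    refine Set.mem_biUnion ?_ (rfl : ω ∈ A _)
    exact Finset.mem_filter.2 ⟨conformal_rank_mem_Icc (fun i => α i ω) (Fin.last n), hω⟩
  set m : ℕ := ⌊ε * ((n:ℝ) + 1)⌋₊ with hm
  have hm1 : ε * ((n:ℝ) + 1) < (m:ℝ) + 1 := Nat.lt_floor_add_one _
  have hmlt : m < n + 1 := by
    rw [hm, Nat.floor_lt (by positivity)]
    push_cast
    nlinarith
  -- cardinality bound for S
  have hcard : S.card ≤ (n + 1) - m := by
    have : S ⊆ Finset.Icc (m+1) (n+1) := by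
      intro k hk
      rw [hS, Finset.mem_filter, Finset.mem_Icc] at hk
      rw [Finset.mem_Icc]
      refine ⟨?_, hk.1.2⟩
      have : ε * ((n:ℝ) + 1) < (k:ℝ) := (lt_div_iff₀ hN).1 hk.2
      have := (Nat.floor_lt (by positivity : (0:ℝ) ≤ ε * ((n:ℝ)+1))).2 this
      omega
    calc S.card ≤ (Finset.Icc (m+1) (n+1)).card := Finset.card_le_card this
      _ = (n + 1) - m := by rw [Nat.card_Icc]; omega
  calc P {ω | (ε : ℝ) <
        ((Finset.univ.filter (fun i => α (Fin.last n) ω ≤ α i ω)).card : ℝ) / (n + 1)}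
      ≤ P (⋃ k ∈ S, A k) := measure_mono hsub
    _ ≤ ∑ k ∈ S, P (A k) := measure_biUnion_finset_le S A
    _ = ∑ _k ∈ S, ((n+1 : ℕ) : ℝ≥0∞)⁻¹ := by
        refine Finset.sum_congr rfl fun k hk => ?_
        rw [hS, Finset.mem_filter] at hk
        exact conformal_rank_uniform P α hmeas hexch hties k hk.1
    _ = (S.card : ℝ≥0∞) * ((n+1 : ℕ) : ℝ≥0∞)⁻¹ := by
        rw [Finset.sum_const, nsmul_eq_mul]
    _ ≤ (((n+1) - m : ℕ) : ℝ≥0∞) * ((n+1 : ℕ) : ℝ≥0∞)⁻¹ := by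
        exact mul_le_mul_left (by exact_mod_cast Nat.cast_le.2 hcard) _
    _ = ENNReal.ofReal ((((n+1) - m : ℕ) : ℝ) / (((n+1 : ℕ)) : ℝ)) := by
        rw [ENNReal.ofReal_div_of_pos (by positivity), ENNReal.ofReal_natCast,
          ENNReal.ofReal_natCast, div_eq_mul_inv]
    _ ≤ ENNReal.ofReal (1 - ε + 1 / (n + 1)) := by
        apply ENNReal.ofReal_le_ofReal
        rw [Nat.cast_sub hmlt.le]
        push_cast
        rw [div_le_iff₀ hN]
        have hrhs : (1 - ε + 1 / ((n:ℝ) + 1)) * ((n:ℝ) + 1) = (1 - ε) * ((n:ℝ) + 1) + 1 := by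
          field_simp
        rw [hrhs]
        nlinarith
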